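/- Let G be a compact Abelian group, μ ∈ M₀₀(G) and ν ∈ M(G) a measure with natural spectrum. Then μ + ν has natural spectrum. Consequently M₀₀(G) ⊆ S(G). -/
import Mathlib


open WeakDual Filter

/-- `μ ∈ M(G)` (modelled as a commutative complex Banach algebra `A` with the dual group `Ĝ`
given as a subset `Ghat` of the Gelfand space) has natural spectrum if `σ(μ)` equals the
closure of the range of its Fourier–Stieltjes transform. -/
def HasNaturalSpectrum {A : Type*} [NormedCommRing A] [NormedAlgebra ℂ A]
    (Ghat : Set (characterSpace ℂ A)) (μ : A) : Prop :=
  spectrum ℂ μ = closure ((fun φ : characterSpace ℂ A => φ μ) '' Ghat)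

/-- Let `G` be a compact Abelian group (so `Ĝ` is discrete),
`μ ∈ M₀₀(G) = {μ : φ(μ) = 0 for all φ ∈ Δ(M(G)) \ Ĝ}` and `ν ∈ M(G)` a measure with natural
spectrum. Then `μ + ν` has natural spectrum; consequently `M₀₀(G) ⊆ S(G)`, the set of
spectrally reasonable measures.

We use as hypotheses Zafran's lemma `hiso` (for compact `G`, every isolated point of the
spectrum lies in the range of the Fourier–Stieltjes transform) and `hM0`
(`M₀₀(G) ⊆ M₀(G)`: transforms of measures in `M₀₀(G)` vanish at infinity on `Ĝ`). -/
theorem M00_subset_spectrallyReasonable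
    {A : Type*} [NormedCommRing A] [NormedAlgebra ℂ A] [CompleteSpace A]
    (Ghat : Set (characterSpace ℂ A))
    (hdiscrete : DiscreteTopology Ghat)
    (hiso : ∀ (ξ : A) (lam : ℂ), lam ∈ spectrum ℂ ξ →
      (∃ U : Set ℂ, IsOpen U ∧ U ∩ spectrum ℂ ξ = {lam}) → ∃ φ ∈ Ghat, φ ξ = lam)
    (hM0 : ∀ μ : A, (∀ φ : characterSpace ℂ A, φ ∉ Ghat → φ μ = 0) →
      Tendsto (fun γ : Ghat => (γ : characterSpace ℂ A) μ) (cocompact Ghat) (nhds 0)) :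
    {μ : A | ∀ φ : characterSpace ℂ A, φ ∉ Ghat → φ μ = 0} ⊆
      {μ : A | ∀ ν : A, HasNaturalSpectrum Ghat ν → HasNaturalSpectrum Ghat (μ + ν)} := by
  intro μ hμ ν hν
  have happ : ∀ (ξ : A) (φ : characterSpace ℂ A), φ ∈ Ghat →
      φ ξ ∈ (fun φ : characterSpace ℂ A => φ ξ) '' Ghat := fun ξ φ hφ => ⟨φ, hφ, rfl⟩
  unfold HasNaturalSpectrum at hν ⊢
  apply Set.eq_of_subset_of_subset
  · -- hard direction
    intro lam hlam
    by_contra hcl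
    -- separation radius from the image of `μ + ν`
    rw [Metric.mem_closure_iff] at hcl
    push_neg at hcl
    obtain ⟨δ₁, hδ₁, hsep⟩ := hcl
    set ε := δ₁ / 2 with hε
    have hεpos : 0 < ε := by positivity
    -- the set where `μ̂` is not small is finite
    have htend := hM0 μ hμ
    rw [cocompact_eq_cofinite] at htend
    have hfin : {γ : Ghat | ¬ dist ((γ : characterSpace ℂ A) μ) 0 < ε}.Finite := by
      have := Metric.tendsto_nhds.mp htend ε hεpos
      rwa [Filter.eventually_cofinite] at this
    -- any character whose `ν`-value is near `lam` lies in this finite set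
    have hkey : ∀ γ : Ghat, dist ((γ : characterSpace ℂ A) ν) lam < ε →
        γ ∈ {γ : Ghat | ¬ dist ((γ : characterSpace ℂ A) μ) 0 < ε} := by
      intro γ hγ
      by_contra hγ'
      simp only [Set.mem_setOf_eq, not_not] at hγ'
      have himg := hsep _ (happ (μ + ν) γ γ.2)
      have : dist lam ((γ : characterSpace ℂ A) (μ + ν)) < δ₁ := by
        have : ((γ : characterSpace ℂ A) (μ + ν)) =
            (γ : characterSpace ℂ A) μ + (γ : characterSpace ℂ A) ν := map_add _ _ _
        rw [this]
        calc dist lam ((γ : characterSpace ℂ A) μ + (γ : characterSpace ℂ A) ν)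
            ≤ dist lam ((γ : characterSpace ℂ A) ν) +
              dist ((γ : characterSpace ℂ A) ν)
                ((γ : characterSpace ℂ A) μ + (γ : characterSpace ℂ A) ν) := dist_triangle _ _ _
          _ < ε + ε := by
              apply add_lt_add
              · rwa [dist_comm]
              · have heq : (γ : characterSpace ℂ A) ν -
                    ((γ : characterSpace ℂ A) μ + (γ : characterSpace ℂ A) ν) =
                    -((γ : characterSpace ℂ A) μ) := by ring
                rw [dist_eq_norm, heq, norm_neg]
                rwa [dist_zero_right] at hγ'
          _ = δ₁ := by rw [hε]; ring
      exact absurd himg (not_le.mpr this)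
    -- the finite set of values
    set V : Set ℂ := (fun γ : Ghat => (γ : characterSpace ℂ A) ν) ''
      {γ : Ghat | ¬ dist ((γ : characterSpace ℂ A) μ) 0 < ε} with hV
    have hVfin : V.Finite := hfin.image _
    -- the spectrum of ν near lam is inside V
    have hspecν : spectrum ℂ ν ∩ Metric.ball lam ε ⊆ V := by
      intro z hz
      obtain ⟨hz1, hz2⟩ := hz
      rw [hν] at hz1
      set T := (fun φ : characterSpace ℂ A => φ ν) '' Ghat with hT
      have hTsplit : T = (T ∩ Metric.ball lam ε) ∪ (T \ Metric.ball lam ε) :=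
        (Set.inter_union_diff T _).symm
      rw [hTsplit, closure_union] at hz1
      rcases hz1 with hz1 | hz1
      · -- values near lam are in V; V is finite hence closed
        have hsub : T ∩ Metric.ball lam ε ⊆ V := by
          rintro w ⟨⟨φ, hφ, rfl⟩, hw⟩
          rw [Metric.mem_ball] at hw
          exact ⟨⟨φ, hφ⟩, hkey ⟨φ, hφ⟩ hw, rfl⟩
        have := closure_mono hsub hz1
        rwa [hVfin.isClosed.closure_eq] at this
      · exfalso
        have : z ∈ (Metric.ball lam ε)ᶜ := by
          have h1 : closure (T \ Metric.ball lam ε) ⊆ (Metric.ball lam ε)ᶜ :=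
            closure_minimal (fun w hw => hw.2) Metric.isOpen_ball.isClosed_compl
          exact h1 hz1
        exact this hz2
    -- lam is isolated: choose a radius avoiding V \ {lam}
    have hVclosed : IsClosed (V \ {lam}) := (hVfin.subset Set.diff_subset).isClosed
    have hlamnot : lam ∈ (V \ {lam})ᶜ := fun h => h.2 rfl
    obtain ⟨δ₂, hδ₂, hball⟩ := Metric.isOpen_iff.mp hVclosed.isOpen_compl lam hlamnot
    set δ := min δ₂ ε with hδ
    have hδpos : 0 < δ := lt_min hδ₂ hεpos
    have hU : Metric.ball lam δ ∩ spectrum ℂ (μ + ν) = {lam} := by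
      apply Set.eq_of_subset_of_subset
      · rintro z ⟨hz1, hz2⟩
        obtain ⟨χ, hχ⟩ := WeakDual.CharacterSpace.mem_spectrum_iff_exists.mp hz2
        by_cases hχG : χ ∈ Ghat
        · exfalso
          have := hsep _ (happ (μ + ν) χ hχG)
          rw [hχ, dist_comm] at this
          have hlt : dist z lam < δ₁ := lt_of_lt_of_le (Metric.mem_ball.mp hz1)
            (le_trans (min_le_right _ _) (by rw [hε]; linarith))
          exact absurd this (not_le.mpr hlt)
        · have hzν : z = χ ν := by
            rw [← hχ, map_add, hμ χ hχG, zero_add]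
          have hzspec : z ∈ spectrum ℂ ν := by
            rw [hzν]; exact WeakDual.CharacterSpace.apply_mem_spectrum χ ν
          have hzV : z ∈ V := hspecν ⟨hzspec,
            Metric.mem_ball.mpr (lt_of_lt_of_le (Metric.mem_ball.mp hz1) (min_le_right _ _))⟩
          have hznot : z ∉ V \ {lam} := by
            intro h
            exact absurd (hball (Metric.mem_ball.mpr
              (lt_of_lt_of_le (Metric.mem_ball.mp hz1) (min_le_left _ _)))) (fun hc => hc ⟨hzV, h.2⟩)
          by_contra hzne
          exact hznot ⟨hzV, hzne⟩
      · rintro z rfl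
        exact ⟨Metric.mem_ball_self hδpos, hlam⟩
    obtain ⟨φ, hφG, hφeq⟩ := hiso (μ + ν) lam hlam ⟨Metric.ball lam δ, Metric.isOpen_ball, hU⟩
    have : dist lam lam < δ₁ := by
      have := hsep _ ⟨φ, hφG, hφeq⟩
      rw [dist_self] at this; linarith
    simp at this; linarith [hsep _ ⟨φ, hφG, hφeq⟩, dist_self lam]
  · -- easy direction: closure of image ⊆ spectrum
    apply closure_minimal
    · rintro z ⟨φ, hφ, rfl⟩
      exact WeakDual.CharacterSpace.apply_mem_spectrum φ (μ + ν)
    · exact spectrum.isClosed _
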